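/- arXiv:1604.07273 — 2 statements merged into one kernel-verified Lean document; each statement's English description precedes it below -/
import Mathlib

section
/- For all integers n, k with 0 < k ≤ n and n ≥ k+2, the number T_{n,k} of labeled partial k-trees on the vertex set {1,…,n} satisfies T_{n,k} ≤ (k · 2^k · n)^n · 2^{−k(k+1)/2} · k^{−k}. -/
/-- The graph on `Fin (m+1)` obtained from a graph `G` on `Fin m` by adding a new
vertex (the last one) adjacent exactly to the vertices of `S`. -/
def extendGraph {m : ℕ} (G : SimpleGraph (Fin m)) (S : Finset (Fin m)) :
    SimpleGraph (Fin (m + 1)) :=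
  SimpleGraph.fromRel fun a b =>
    (∃ a' b' : Fin m, a = Fin.castSucc a' ∧ b = Fin.castSucc b' ∧ G.Adj a' b') ∨
    (a = Fin.last m ∧ ∃ b' ∈ S, b = Fin.castSucc b')

/-- Graphs produced by the `k`-tree construction process: start from a complete graph on
`k+1` vertices, and iteratively add a new vertex adjacent to exactly `k` existing vertices
that form a clique. -/
inductive IsKTreeConstr (k : ℕ) : (m : ℕ) → SimpleGraph (Fin m) → Prop
  | base : IsKTreeConstr k (k + 1) ⊤
  | step {m : ℕ} {G : SimpleGraph (Fin m)} (hG : IsKTreeConstr k m G)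
      (S : Finset (Fin m)) (hcard : S.card = k)
      (hclique : G.IsClique (S : Set (Fin m))) :
      IsKTreeConstr k (m + 1) (extendGraph G S)

/-- `G` is a partial `k`-tree: a subgraph of some `k`-tree. -/
def IsPartialKTree (k : ℕ) {n : ℕ} (G : SimpleGraph (Fin n)) : Prop :=
  ∃ (m : ℕ) (H : SimpleGraph (Fin m)) (f : Fin n ↪ Fin m),
    IsKTreeConstr k m H ∧ ∀ u v : Fin n, G.Adj u v → H.Adj (f u) (f v)

/-- `T n k`: the number of labeled partial `k`-trees on the vertex set `{1,…,n}`. -/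
noncomputable def numPartialKTrees (n k : ℕ) : ℕ :=
  Nat.card {G : SimpleGraph (Fin n) // IsPartialKTree k G}


lemma extendGraph_adj_castSucc {m : ℕ} {G : SimpleGraph (Fin m)} {S : Finset (Fin m)}
    {a b : Fin m} : (extendGraph G S).Adj a.castSucc b.castSucc ↔ G.Adj a b := by
  simp only [extendGraph, SimpleGraph.fromRel_adj]
  constructor
  · rintro ⟨hne, h | h⟩
    · rcases h with ⟨a', b', ha, hb, hadj⟩ | ⟨h, -⟩
      · rwa [Fin.castSucc_inj.mp ha, Fin.castSucc_inj.mp hb]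
      · exact absurd h (Fin.castSucc_lt_last a).ne
    · rcases h with ⟨a', b', ha, hb, hadj⟩ | ⟨h, -⟩
      · exact ((Fin.castSucc_inj.mp hb) ▸ (Fin.castSucc_inj.mp ha) ▸ hadj).symm
      · exact absurd h (Fin.castSucc_lt_last b).ne
  · intro h
    exact ⟨by simpa using h.ne, Or.inl (Or.inl ⟨a, b, rfl, rfl, h⟩)⟩

lemma extendGraph_adj_last {m : ℕ} {G : SimpleGraph (Fin m)} {S : Finset (Fin m)}
    {b : Fin m} : (extendGraph G S).Adj (Fin.last m) b.castSucc ↔ b ∈ S := by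
  simp only [extendGraph, SimpleGraph.fromRel_adj]
  constructor
  · rintro ⟨hne, h | h⟩
    · rcases h with ⟨a', b', ha, hb, hadj⟩ | ⟨-, b', hb', hbeq⟩
      · exact absurd ha.symm (Fin.castSucc_lt_last a').ne
      · rwa [Fin.castSucc_inj.mp hbeq]
    · rcases h with ⟨a', b', ha, hb, hadj⟩ | ⟨h, -⟩
      · exact absurd hb.symm (Fin.castSucc_lt_last b').ne
      · exact absurd h (Fin.castSucc_lt_last b).ne
  · intro h
    exact ⟨(Fin.castSucc_lt_last b).ne', Or.inl (Or.inr ⟨trivial, b, h, rfl⟩)⟩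

lemma kconstr_ge {k m : ℕ} {H : SimpleGraph (Fin m)} (h : IsKTreeConstr k m H) :
    k + 1 ≤ m := by
  induction h with
  | base => exact le_refl _
  | step hG S hcard hclique ih => exact ih.trans (Nat.le_succ _)

def KData (k n : ℕ) (H : SimpleGraph (Fin n)) (S : Fin n → Finset (Fin n)) : Prop :=
  (∀ a, a.val ≤ k → S a = (Finset.univ.filter fun w : Fin n => w.val ≤ k).erase a) ∧
  (∀ a, (S a).card = k) ∧
  (∀ a, k < a.val → ∀ b ∈ S a, b < a) ∧
  (∀ a, H.IsClique (S a : Set (Fin n))) ∧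
  (∀ a b, b < a → (H.Adj a b ↔ b ∈ S a))

lemma castSucc_image_filter {m k : ℕ} (hkm : k + 1 ≤ m) :
    (Finset.univ.filter fun w : Fin m => w.val ≤ k).image Fin.castSucc
      = (Finset.univ.filter fun w : Fin (m+1) => w.val ≤ k) := by
  ext w
  simp only [Finset.mem_image, Finset.mem_filter, Finset.mem_univ, true_and]
  constructor
  · rintro ⟨w', hw', rfl⟩; simpa using hw'
  · intro hw
    exact ⟨⟨w.val, by omega⟩, by simpa using hw, by ext; simp⟩

lemma exists_kdata {k m : ℕ} {H : SimpleGraph (Fin m)} (h : IsKTreeConstr k m H) :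
    ∃ S, KData k m H S := by
  induction h with
  | base =>
    refine ⟨fun a => Finset.univ.erase a, ?_, ?_, ?_, ?_, ?_⟩
    · intro a _
      congr 1
      rw [Finset.filter_true_of_mem (fun w _ => by omega)]
    · intro a
      rw [Finset.card_erase_of_mem (Finset.mem_univ a)]
      simp
    · intro a ha; have := a.isLt; omega
    · intro a x hx y hy hxy
      exact (SimpleGraph.top_adj _ _).mpr hxy
    · intro a b hba
      simp only [SimpleGraph.top_adj, Finset.mem_erase, Finset.mem_univ, and_true]
      exact ⟨fun h => hba.ne, fun h => hba.ne'⟩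
  | @step m G hG Sstep hcard hclique ih =>
    obtain ⟨S0, hd1, hd2, hd3, hd4, hd5⟩ := ih
    have hkm : k + 1 ≤ m := kconstr_ge hG
    refine ⟨fun a => Fin.lastCases (Sstep.image Fin.castSucc)
      (fun a' => (S0 a').image Fin.castSucc) a, ?_, ?_, ?_, ?_, ?_⟩
    · intro a ha
      induction a using Fin.lastCases with
      | last => simp only [Fin.val_last] at ha; omega
      | cast a' =>
        simp only [Fin.lastCases_castSucc]
        rw [hd1 a' (by simpa using ha),
          Finset.image_erase (Fin.castSucc_injective m), castSucc_image_filter hkm]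
    · intro a
      induction a using Fin.lastCases with
      | last =>
        simp only [Fin.lastCases_last]
        rw [Finset.card_image_of_injective _ (Fin.castSucc_injective m)]; exact hcard
      | cast a' =>
        simp only [Fin.lastCases_castSucc]
        rw [Finset.card_image_of_injective _ (Fin.castSucc_injective m)]; exact hd2 a'
    · intro a ha b hb
      induction a using Fin.lastCases with
      | last =>
        simp only [Fin.lastCases_last, Finset.mem_image] at hb
        obtain ⟨b', _, rfl⟩ := hb
        exact Fin.castSucc_lt_last b'
      | cast a' =>
        simp only [Fin.lastCases_castSucc, Finset.mem_image] at hb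
        obtain ⟨b', hb', rfl⟩ := hb
        exact Fin.castSucc_lt_castSucc_iff.mpr (hd3 a' (by simpa using ha) b' hb')
    · intro a x hx y hy hxy
      induction a using Fin.lastCases with
      | last =>
        simp only [Fin.lastCases_last, Finset.coe_image, Set.mem_image, Finset.mem_coe] at hx hy
        obtain ⟨x', hx', rfl⟩ := hx
        obtain ⟨y', hy', rfl⟩ := hy
        exact extendGraph_adj_castSucc.mpr
          (hclique hx' hy' (fun hh => hxy (by rw [hh])))
      | cast a' =>
        simp only [Fin.lastCases_castSucc, Finset.coe_image, Set.mem_image,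
          Finset.mem_coe] at hx hy
        obtain ⟨x', hx', rfl⟩ := hx
        obtain ⟨y', hy', rfl⟩ := hy
        exact extendGraph_adj_castSucc.mpr
          (hd4 a' hx' hy' (fun hh => hxy (by rw [hh])))
    · intro a b hba
      induction a using Fin.lastCases with
      | last =>
        induction b using Fin.lastCases with
        | last => exact absurd hba (lt_irrefl _)
        | cast b' =>
          simp only [Fin.lastCases_last, Finset.mem_image]
          rw [extendGraph_adj_last]
          constructor
          · intro hb'; exact ⟨b', hb', rfl⟩
          · rintro ⟨c, hc, hcb⟩; rwa [← Fin.castSucc_inj.mp hcb]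
      | cast a' =>
        induction b using Fin.lastCases with
        | last => exact absurd hba (lt_asymm (Fin.castSucc_lt_last a'))
        | cast b' =>
          simp only [Fin.lastCases_castSucc, Finset.mem_image]
          rw [extendGraph_adj_castSucc, hd5 a' b' (by simpa using hba)]
          constructor
          · intro hb'; exact ⟨b', hb', rfl⟩
          · rintro ⟨c, hc, hcb⟩; rwa [← Fin.castSucc_inj.mp hcb]

lemma kdata_maxptr {k n : ℕ} {H : SimpleGraph (Fin n)} {S : Fin n → Finset (Fin n)}
    (hd : KData k n H S) (hk : 0 < k) (a : Fin n) (ha : k < a.val) :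
    ∃ p, p ∈ S a ∧ p < a ∧ ∃ x ∈ S p, S a = insert p ((S p).erase x) := by
  obtain ⟨hd1, hd2, hd3, hd4, hd5⟩ := hd
  have hne : (S a).Nonempty := Finset.card_pos.mp (by rw [hd2]; exact hk)
  set p := (S a).max' hne with hp
  have hpmem : p ∈ S a := (S a).max'_mem hne
  have hpa : p < a := hd3 a ha p hpmem
  have hsub : (S a).erase p ⊆ S p := by
    intro q hq
    obtain ⟨hqp, hqa⟩ := Finset.mem_erase.mp hq
    have hqlt : q < p := lt_of_le_of_ne ((S a).le_max' q hqa) hqp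
    exact (hd5 p q hqlt).mp (hd4 a hpmem hqa (fun h => hqp (h.symm)))
  have hpnot : p ∉ S p := by
    by_cases hpk : k < p.val
    · intro hmem; exact absurd (hd3 p hpk p hmem) (lt_irrefl _)
    · rw [hd1 p (by omega)]; exact fun hmem => (Finset.mem_erase.mp hmem).1 rfl
  have hx : ∃ x ∈ S p, x ∉ (S a).erase p := by
    by_contra hcon
    push_neg at hcon
    have hss : S p ⊆ (S a).erase p := hcon
    have := Finset.card_le_card hss
    rw [hd2, Finset.card_erase_of_mem hpmem, hd2] at this
    omega
  obtain ⟨x, hxS, hxnot⟩ := hx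
  refine ⟨p, hpmem, hpa, x, hxS, ?_⟩
  have heq : (S a).erase p = (S p).erase x := by
    apply Finset.eq_of_subset_of_card_le
    · intro q hq
      exact Finset.mem_erase.mpr ⟨fun h => hxnot (h ▸ hq), hsub hq⟩
    · rw [Finset.card_erase_of_mem hxS, Finset.card_erase_of_mem hpmem, hd2, hd2]
  rw [← heq, Finset.insert_erase hpmem]

lemma kconstr_clique_extend {k m : ℕ} {H : SimpleGraph (Fin m)}
    (h : IsKTreeConstr k m H) :
    ∀ C : Finset (Fin m), H.IsClique (C : Set (Fin m)) → C.card ≤ k →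
      ∃ D, C ⊆ D ∧ H.IsClique (D : Set (Fin m)) ∧ D.card = k := by
  induction h with
  | base =>
    intro C hC hcard
    obtain ⟨D, hCD, hDcard⟩ := Finset.exists_superset_card_eq hcard (by simp)
    exact ⟨D, hCD, fun x _ y _ hxy => (SimpleGraph.top_adj _ _).mpr hxy, hDcard⟩
  | @step m G hG Sstep hscard hclique ih =>
    intro C hC hcard
    have hinj := Fin.castSucc_injective m
    by_cases hl : Fin.last m ∈ C
    · have hk1 : 1 ≤ k := le_trans (Finset.card_pos.mpr ⟨_, hl⟩) hcard
      set C' : Finset (Fin m) :=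
        (C.erase (Fin.last m)).preimage Fin.castSucc (hinj.injOn) with hC'
      have himg : C'.image Fin.castSucc = C.erase (Fin.last m) := by
        ext w
        simp only [Finset.mem_image, hC', Finset.mem_preimage]
        constructor
        · rintro ⟨w', hw', rfl⟩; exact hw'
        · intro hw
          have hwne : w ≠ Fin.last m := (Finset.mem_erase.mp hw).1
          exact ⟨w.castPred hwne, by rwa [Fin.castSucc_castPred],
            Fin.castSucc_castPred w hwne⟩
      have hC'S : C' ⊆ Sstep := by
        intro c hc
        have hcmem : c.castSucc ∈ C.erase (Fin.last m) := Finset.mem_preimage.mp hc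
        have hcC : c.castSucc ∈ C := Finset.mem_of_mem_erase hcmem
        have hadj : (extendGraph G Sstep).Adj (Fin.last m) c.castSucc :=
          hC hl hcC (Fin.castSucc_lt_last c).ne'
        exact extendGraph_adj_last.mp hadj
      have hC'card : C'.card ≤ k - 1 := by
        have : C'.card = (C.erase (Fin.last m)).card := by
          rw [← himg, Finset.card_image_of_injective _ hinj]
        rw [this, Finset.card_erase_of_mem hl]
        omega
      obtain ⟨D', hCD', hD'S, hD'card⟩ :=
        Finset.exists_subsuperset_card_eq hC'S hC'card (by rw [hscard]; omega)
      refine ⟨insert (Fin.last m) (D'.image Fin.castSucc), ?_, ?_, ?_⟩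
      · intro c hc
        by_cases hcl : c = Fin.last m
        · exact hcl ▸ Finset.mem_insert_self _ _
        · refine Finset.mem_insert_of_mem ?_
          have : c ∈ C.erase (Fin.last m) := Finset.mem_erase.mpr ⟨hcl, hc⟩
          rw [← himg] at this
          obtain ⟨c', hc', rfl⟩ := Finset.mem_image.mp this
          exact Finset.mem_image_of_mem _ (hCD' hc')
      · intro x hx y hy hxy
        simp only [Finset.coe_insert, Set.mem_insert_iff, Finset.coe_image,
          Set.mem_image, Finset.mem_coe] at hx hy
        rcases hx with rfl | ⟨x', hx', rfl⟩
        · rcases hy with rfl | ⟨y', hy', rfl⟩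
          · exact absurd rfl hxy
          · exact extendGraph_adj_last.mpr (hD'S hy')
        · rcases hy with rfl | ⟨y', hy', rfl⟩
          · exact (extendGraph_adj_last.mpr (hD'S hx')).symm
          · exact extendGraph_adj_castSucc.mpr
              (hclique (hD'S hx') (hD'S hy') (fun hh => hxy (by rw [hh])))
      · rw [Finset.card_insert_of_notMem, Finset.card_image_of_injective _ hinj,
          hD'card]
        · omega
        · intro hmem
          obtain ⟨c', _, hc'⟩ := Finset.mem_image.mp hmem
          exact (Fin.castSucc_lt_last c').ne hc'
    · set C' : Finset (Fin m) := C.preimage Fin.castSucc (hinj.injOn) with hC'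
      have himg : C'.image Fin.castSucc = C := by
        ext w
        simp only [Finset.mem_image, hC', Finset.mem_preimage]
        constructor
        · rintro ⟨w', hw', rfl⟩; exact hw'
        · intro hw
          have hwne : w ≠ Fin.last m := fun h => hl (h ▸ hw)
          exact ⟨w.castPred hwne, by rwa [Fin.castSucc_castPred],
            Fin.castSucc_castPred w hwne⟩
      have hcl : G.IsClique (C' : Set (Fin m)) := by
        intro x hx y hy hxy
        have hadj : (extendGraph G Sstep).Adj x.castSucc y.castSucc :=
          hC (Finset.mem_preimage.mp hx) (Finset.mem_preimage.mp hy)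
            (fun hh => hxy (hinj hh))
        exact extendGraph_adj_castSucc.mp hadj
      have hccard : C'.card ≤ k := by
        rw [← himg, Finset.card_image_of_injective _ hinj] at hcard; exact hcard
      obtain ⟨D', hCD', hD'cl, hD'card⟩ := ih C' hcl hccard
      refine ⟨D'.image Fin.castSucc, ?_, ?_, ?_⟩
      · rw [← himg]; exact Finset.image_subset_image hCD'
      · intro x hx y hy hxy
        simp only [Finset.coe_image, Set.mem_image, Finset.mem_coe] at hx hy
        obtain ⟨x', hx', rfl⟩ := hx
        obtain ⟨y', hy', rfl⟩ := hy
        exact extendGraph_adj_castSucc.mpr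
          (hD'cl hx' hy' (fun hh => hxy (by rw [hh])))
      · rw [Finset.card_image_of_injective _ hinj]; exact hD'card

lemma preimage_castSucc_image {m : ℕ} (A : Finset (Fin (m+1)))
    (hl : Fin.last m ∉ A) :
    (A.preimage Fin.castSucc ((Fin.castSucc_injective m).injOn)).image Fin.castSucc
      = A := by
  ext w
  simp only [Finset.mem_image, Finset.mem_preimage]
  constructor
  · rintro ⟨w', hw', rfl⟩; exact hw'
  · intro hw
    have hwne : w ≠ Fin.last m := fun h => hl (h ▸ hw)
    exact ⟨w.castPred hwne, by rwa [Fin.castSucc_castPred],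
      Fin.castSucc_castPred w hwne⟩

/-- the trivial case: if `A.card = k+1` we can embed into the complete graph. -/

lemma top_case {m k n : ℕ} (H : SimpleGraph (Fin m)) (A : Finset (Fin m))
    (hA : A.card = n) (hn : n = k + 1) :
    ∃ H' : SimpleGraph (Fin n), IsKTreeConstr k n H' ∧
      ∃ g : Fin m → Fin n, Set.InjOn g (A : Set (Fin m)) ∧
        ∀ u v, u ∈ A → v ∈ A → H.Adj u v → H'.Adj (g u) (g v) := by
  have hnpos : 0 < n := by omega
  refine ⟨⊤, by rw [hn]; exact IsKTreeConstr.base, ?_⟩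
  refine ⟨fun u => if h : u ∈ A then ((A.orderIsoOfFin hA).symm ⟨u, h⟩) else ⟨0, hnpos⟩,
    ?_, ?_⟩
  · intro u hu v hv huv
    simp only [Finset.mem_coe] at hu hv
    simp only [dif_pos hu, dif_pos hv] at huv
    exact Subtype.mk_eq_mk.mp ((A.orderIsoOfFin hA).symm.injective huv)
  · intro u v hu hv hadj
    simp only [dif_pos hu, dif_pos hv]
    exact (SimpleGraph.top_adj _ _).mpr fun hc => hadj.ne
      (Subtype.mk_eq_mk.mp ((A.orderIsoOfFin hA).symm.injective hc))

lemma kconstr_subset {k m : ℕ} {H : SimpleGraph (Fin m)} (h : IsKTreeConstr k m H) :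
    ∀ (A : Finset (Fin m)) (n : ℕ), A.card = n → k + 1 ≤ n →
    ∃ H' : SimpleGraph (Fin n), IsKTreeConstr k n H' ∧
      ∃ g : Fin m → Fin n, Set.InjOn g (A : Set (Fin m)) ∧
        ∀ u v, u ∈ A → v ∈ A → H.Adj u v → H'.Adj (g u) (g v) := by
  induction h with
  | base =>
    intro A n hA hn
    have hle : n ≤ k + 1 := by
      rw [← hA]
      simpa using Finset.card_le_univ A
    exact top_case _ A hA (by omega)
  | @step m G hG Sstep hscard hclique ih =>
    intro A n hA hn
    by_cases htriv : n = k + 1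
    · exact top_case _ A hA htriv
    have hn2 : k + 2 ≤ n := by omega
    have hinj := Fin.castSucc_injective m
    by_cases hl : Fin.last m ∈ A
    · obtain ⟨n', rfl⟩ : ∃ n', n = n' + 1 := ⟨n - 1, by omega⟩
      set B : Finset (Fin m) := (A.erase (Fin.last m)).preimage Fin.castSucc
        (hinj.injOn) with hB
      have hBimg : B.image Fin.castSucc = A.erase (Fin.last m) := by
        rw [hB, preimage_castSucc_image _ (fun hc => (Finset.mem_erase.mp hc).1 rfl)]
      have hBcard : B.card = n' := by
        have : B.card = (A.erase (Fin.last m)).card := by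
          rw [← hBimg, Finset.card_image_of_injective _ hinj]
        rw [this, Finset.card_erase_of_mem hl, hA]
        omega
      obtain ⟨H'', hH'', g', hginj', hgadj'⟩ := ih B n' hBcard (by omega)
      set SA : Finset (Fin m) := Sstep.filter (fun s => s.castSucc ∈ A) with hSA
      have hSAB : SA ⊆ B := by
        intro s hs
        obtain ⟨hs1, hs2⟩ := Finset.mem_filter.mp hs
        exact Finset.mem_preimage.mpr
          (Finset.mem_erase.mpr ⟨(Fin.castSucc_lt_last s).ne, hs2⟩)
      have hCclique : H''.IsClique ((SA.image g' : Finset (Fin n')) : Set (Fin n')) := by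
        intro x hx y hy hxy
        simp only [Finset.coe_image, Set.mem_image, Finset.mem_coe] at hx hy
        obtain ⟨s, hs, rfl⟩ := hx
        obtain ⟨t, ht, rfl⟩ := hy
        have hst : s ≠ t := fun hc => hxy (by rw [hc])
        have : G.Adj s t := hclique (Finset.mem_filter.mp hs).1
          (Finset.mem_filter.mp ht).1 hst
        exact hgadj' s t (hSAB hs) (hSAB ht) this
      have hCcard : (SA.image g').card ≤ k := by
        calc (SA.image g').card ≤ SA.card := Finset.card_image_le
        _ ≤ Sstep.card := Finset.card_filter_le _ _
        _ = k := hscard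
      obtain ⟨D, hCD, hDclique, hDcard⟩ :=
        kconstr_clique_extend hH'' (SA.image g') hCclique hCcard
      refine ⟨extendGraph H'' D, IsKTreeConstr.step hH'' D hDcard hDclique, ?_⟩
      refine ⟨fun u => Fin.lastCases (Fin.last n') (fun u' => (g' u').castSucc) u,
        ?_, ?_⟩
      · intro u hu v hv huv
        simp only [Finset.mem_coe] at hu hv
        rcases Fin.eq_castSucc_or_eq_last u with ⟨u', rfl⟩ | rfl <;>
          rcases Fin.eq_castSucc_or_eq_last v with ⟨v', rfl⟩ | rfl
        · simp only [Fin.lastCases_castSucc] at huv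
          have hu'B : u' ∈ B := Finset.mem_preimage.mpr
            (Finset.mem_erase.mpr ⟨(Fin.castSucc_lt_last u').ne, hu⟩)
          have hv'B : v' ∈ B := Finset.mem_preimage.mpr
            (Finset.mem_erase.mpr ⟨(Fin.castSucc_lt_last v').ne, hv⟩)
          rw [hginj' hu'B hv'B (Fin.castSucc_injective _ huv)]
        · simp only [Fin.lastCases_castSucc, Fin.lastCases_last] at huv
          exact absurd huv (Fin.castSucc_lt_last _).ne
        · simp only [Fin.lastCases_castSucc, Fin.lastCases_last] at huv
          exact absurd huv.symm (Fin.castSucc_lt_last _).ne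
        · rfl
      · intro u v hu hv hadj
        rcases Fin.eq_castSucc_or_eq_last u with ⟨u', rfl⟩ | rfl <;>
          rcases Fin.eq_castSucc_or_eq_last v with ⟨v', rfl⟩ | rfl
        · simp only [Fin.lastCases_castSucc]
          have hu'B : u' ∈ B := Finset.mem_preimage.mpr
            (Finset.mem_erase.mpr ⟨(Fin.castSucc_lt_last u').ne, hu⟩)
          have hv'B : v' ∈ B := Finset.mem_preimage.mpr
            (Finset.mem_erase.mpr ⟨(Fin.castSucc_lt_last v').ne, hv⟩)
          exact extendGraph_adj_castSucc.mpr
            (hgadj' u' v' hu'B hv'B (extendGraph_adj_castSucc.mp hadj))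
        · simp only [Fin.lastCases_castSucc, Fin.lastCases_last]
          have hu'S : u' ∈ Sstep := extendGraph_adj_last.mp hadj.symm
          have : g' u' ∈ D := hCD (Finset.mem_image_of_mem _
            (Finset.mem_filter.mpr ⟨hu'S, hu⟩))
          exact (extendGraph_adj_last.mpr this).symm
        · simp only [Fin.lastCases_castSucc, Fin.lastCases_last]
          have hv'S : v' ∈ Sstep := extendGraph_adj_last.mp hadj
          have : g' v' ∈ D := hCD (Finset.mem_image_of_mem _
            (Finset.mem_filter.mpr ⟨hv'S, hv⟩))
          exact extendGraph_adj_last.mpr this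
        · exact absurd rfl hadj.ne
    · set A' : Finset (Fin m) := A.preimage Fin.castSucc (hinj.injOn) with hA'
      have hAimg : A'.image Fin.castSucc = A := preimage_castSucc_image A hl
      have hA'card : A'.card = n := by
        rw [← hA, ← hAimg, Finset.card_image_of_injective _ hinj]
      obtain ⟨H'', hH'', g', hginj', hgadj'⟩ := ih A' n hA'card hn
      refine ⟨H'', hH'', ?_⟩
      refine ⟨fun u => Fin.lastCases ⟨0, by omega⟩ (fun u' => g' u') u, ?_, ?_⟩
      · intro u hu v hv huv
        simp only [Finset.mem_coe] at hu hv
        rcases Fin.eq_castSucc_or_eq_last u with ⟨u', rfl⟩ | rfl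
        · rcases Fin.eq_castSucc_or_eq_last v with ⟨v', rfl⟩ | rfl
          · simp only [Fin.lastCases_castSucc] at huv
            rw [hginj' (Finset.mem_preimage.mpr hu) (Finset.mem_preimage.mpr hv) huv]
          · exact absurd hv hl
        · exact absurd hu hl
      · intro u v hu hv hadj
        rcases Fin.eq_castSucc_or_eq_last u with ⟨u', rfl⟩ | rfl
        · rcases Fin.eq_castSucc_or_eq_last v with ⟨v', rfl⟩ | rfl
          · simp only [Fin.lastCases_castSucc]
            exact hgadj' u' v' (Finset.mem_preimage.mpr hu)
              (Finset.mem_preimage.mpr hv) (extendGraph_adj_castSucc.mp hadj)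
          · exact absurd hv hl
        · exact absurd hu hl

structure Wit (k n : ℕ) (G : SimpleGraph (Fin n)) where
  r : Fin n ≃ Fin n
  S : Fin n → Finset (Fin n)
  hbase : ∀ u, (r u).val ≤ k →
    S u = (Finset.univ.filter fun w => (r w).val ≤ k).erase u
  hcard : ∀ u, (S u).card = k
  hlt : ∀ u, k < (r u).val → ∀ w ∈ S u, r w < r u
  hpt : ∀ u, k < (r u).val →
    ∃ p, r p < r u ∧ ∃ x ∈ S p, S u = insert p ((S p).erase x)
  hedge : ∀ u w, G.Adj u w → r w < r u → w ∈ S u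

lemma exists_wit {k n : ℕ} {G : SimpleGraph (Fin n)} (hk : 0 < k) (hn : k + 1 ≤ n)
    (h : IsPartialKTree k G) : Nonempty (Wit k n G) := by
  obtain ⟨m, H, f, hH, hsub⟩ := h
  set A : Finset (Fin m) := Finset.univ.map f with hA
  have hAcard : A.card = n := by simp [hA]
  obtain ⟨H1, hH1, g, hginj, hgadj⟩ := kconstr_subset hH A n hAcard hn
  have hmem : ∀ u : Fin n, f u ∈ A := fun u => by simp [hA]
  have htauinj : Function.Injective (fun u => g (f u)) := by
    intro u v huv
    exact f.injective (hginj (hmem u) (hmem v) huv)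
  set rE : Fin n ≃ Fin n :=
    Equiv.ofBijective _ (Finite.injective_iff_bijective.mp htauinj) with hrE
  have hrEapp : ∀ u, rE u = g (f u) := fun u => rfl
  obtain ⟨S1, hd⟩ := exists_kdata hH1
  obtain ⟨hd1, hd2, hd3, hd4, hd5⟩ := hd
  have hSymm : ∀ w' : Fin n, rE (rE.symm w') = w' := fun w' => rE.apply_symm_apply w'
  have himgfilter : (Finset.univ.filter fun w : Fin n => w.val ≤ k).image rE.symm
      = Finset.univ.filter fun w : Fin n => (rE w).val ≤ k := by
    ext w
    simp only [Finset.mem_image, Finset.mem_filter, Finset.mem_univ, true_and]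
    constructor
    · rintro ⟨w', hw', rfl⟩; rwa [hSymm]
    · intro hw; exact ⟨rE w, hw, rE.symm_apply_apply w⟩
  refine ⟨⟨rE, fun u => (S1 (rE u)).image rE.symm, ?_, ?_, ?_, ?_, ?_⟩⟩
  · intro u hu
    beta_reduce
    rw [hd1 _ hu, Finset.image_erase rE.symm.injective, himgfilter, rE.symm_apply_apply]
  · intro u
    beta_reduce
    rw [Finset.card_image_of_injective _ rE.symm.injective]; exact hd2 _
  · intro u hu w hw
    obtain ⟨w', hw', rfl⟩ := Finset.mem_image.mp hw
    rw [hSymm]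
    exact hd3 _ hu _ hw'
  · intro u hu
    obtain ⟨p1, hp1mem, hp1lt, x1, hx1, hSeq⟩ := kdata_maxptr ⟨hd1, hd2, hd3, hd4, hd5⟩ hk (rE u) hu
    refine ⟨rE.symm p1, by rwa [hSymm], rE.symm x1, ?_, ?_⟩
    · beta_reduce
      rw [hSymm]; exact Finset.mem_image_of_mem _ hx1
    · beta_reduce
      rw [hSeq, Finset.image_insert, Finset.image_erase rE.symm.injective, hSymm]
  · intro u w hadj hlt
    have hH1adj : H1.Adj (rE u) (rE w) := hgadj _ _ (hmem u) (hmem w) (hsub u w hadj)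
    have := (hd5 (rE u) (rE w) hlt).mp hH1adj
    have : rE.symm (rE w) ∈ (S1 (rE u)).image rE.symm := Finset.mem_image_of_mem _ this
    rwa [rE.symm_apply_apply] at this

abbrev KCode (n k : ℕ) :=
  (Fin (k+1) → Fin n) × ({ p : Fin (k+1) × Fin (k+1) // p.1 < p.2 } → Bool) ×
    (Fin (n-k-1) → Fin n × Fin k × (Fin k → Bool))

def nthel {n : ℕ} (s : Finset (Fin n)) (i : ℕ) (dflt : Fin n) : Fin n :=
  (s.sort (· ≤ ·)).getD i dflt

def trOf (n k : ℕ) (c : KCode n k) (u : Fin n) :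
    Option (Fin n × Fin k × (Fin k → Bool)) :=
  if h : (Finset.univ \ Finset.image c.1 Finset.univ).card = n - k - 1 then
    if hu : u ∈ Finset.univ \ Finset.image c.1 Finset.univ then
      some (c.2.2
        (((Finset.univ \ Finset.image c.1 Finset.univ).orderIsoOfFin h).symm ⟨u, hu⟩))
    else none
  else none

def Sfuel (n k : ℕ) (c : KCode n k) : ℕ → Fin n → Finset (Fin n)
  | 0, _ => ∅
  | (t+1), u =>
    if u ∈ Finset.image c.1 Finset.univ then (Finset.image c.1 Finset.univ).erase u
    else
      match trOf n k c u with
      | none => ∅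
      | some tr =>
        insert tr.1 ((Sfuel n k c t tr.1).erase
          (nthel (Sfuel n k c t tr.1) tr.2.1.val u))

lemma Sfuel_succ (n k : ℕ) (c : KCode n k) (t : ℕ) (u : Fin n) :
    Sfuel n k c (t+1) u =
      if u ∈ Finset.image c.1 Finset.univ then (Finset.image c.1 Finset.univ).erase u
      else
        match trOf n k c u with
        | none => ∅
        | some tr => insert tr.1 ((Sfuel n k c t tr.1).erase
            (nthel (Sfuel n k c t tr.1) tr.2.1.val u)) := rfl

def decodeGraph (n k : ℕ) (c : KCode n k) : SimpleGraph (Fin n) :=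
  SimpleGraph.fromRel fun u v =>
    (∃ i j : Fin (k+1), ∃ hij : i < j, c.1 i = u ∧ c.1 j = v ∧
      c.2.1 ⟨(i, j), hij⟩ = true) ∨
    (∃ tr, trOf n k c u = some tr ∧ ∃ i : Fin k, tr.2.2 i = true ∧
      nthel (Sfuel n k c n u) i.val u = v)

theorem exists_code {k n : ℕ} (hk : 0 < k) (hn : k + 1 ≤ n) {G : SimpleGraph (Fin n)}
    (W : Wit k n G) : ∃ c : KCode n k, decodeGraph n k c = G := by
  classical
  set base : Fin (k+1) → Fin n :=
    fun i => W.r.symm ⟨i.val, lt_of_lt_of_le i.isLt hn⟩ with hbase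
  have hbinj : Function.Injective base := by
    intro i j h
    have := W.r.symm.injective h
    simpa [Fin.ext_iff] using congrArg Fin.val this
  have hbase_eval : ∀ (w : Fin n) (h : (W.r w).val < k + 1),
      base ⟨(W.r w).val, h⟩ = w := by
    intro w h
    show W.r.symm _ = w
    rw [Equiv.symm_apply_eq]
  have hbimg : Finset.image base Finset.univ
      = Finset.univ.filter (fun u => (W.r u).val ≤ k) := by
    ext u
    rw [Finset.mem_image, Finset.mem_filter]
    constructor
    · rintro ⟨i, -, rfl⟩
      refine ⟨Finset.mem_univ _, ?_⟩
      have heq : W.r (base i) = ⟨i.val, lt_of_lt_of_le i.isLt hn⟩ :=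
        W.r.apply_symm_apply _
      rw [heq]
      exact Nat.lt_succ_iff.mp i.isLt
    · rintro ⟨-, hu⟩
      exact ⟨⟨(W.r u).val, by omega⟩, Finset.mem_univ _, hbase_eval u (by omega)⟩
  have hptot : ∀ u : Fin n, ∃ pp qq : Fin n, k < (W.r u).val →
      W.r pp < W.r u ∧ qq ∈ W.S pp ∧ W.S u = insert pp ((W.S pp).erase qq) := by
    intro u
    by_cases h : k < (W.r u).val
    · obtain ⟨pp, h1, qq, h2, h3⟩ := W.hpt u h
      exact ⟨pp, qq, fun _ => ⟨h1, h2, h3⟩⟩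
    · exact ⟨u, u, fun hc => absurd hc h⟩
  choose p x hprop using hptot
  set F : Fin n → Fin k → Bool := fun u i =>
    decide (G.Adj u (nthel (W.S u) i.val u)) with hF
  set d : Fin n → ℕ := fun u => List.idxOf (x u) ((W.S (p u)).sort (· ≤ ·)) with hd
  have hdlt : ∀ u, k < (W.r u).val → d u < k := by
    intro u hu
    have hx : x u ∈ (W.S (p u)).sort (· ≤ ·) :=
      (Finset.mem_sort _).mpr (hprop u hu).2.1
    have := List.idxOf_lt_length_iff.mpr hx
    rwa [Finset.length_sort, W.hcard] at this
  set dF : Fin n → Fin k := fun u =>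
    if h : k < (W.r u).val then ⟨d u, hdlt u h⟩ else ⟨0, hk⟩ with hdF
  set trip : Fin n → Fin n × Fin k × (Fin k → Bool) := fun u => (p u, dF u, F u)
    with htrip
  set NB : Finset (Fin n) := Finset.univ \ Finset.image base Finset.univ with hNB
  have hNBcard : NB.card = n - k - 1 := by
    rw [hNB, Finset.card_sdiff_of_subset (Finset.subset_univ _),
      Finset.card_image_of_injective _ hbinj]
    simp only [Finset.card_univ, Fintype.card_fin]
    omega
  set c : KCode n k := (base, fun q => decide (G.Adj (base q.1.1) (base q.1.2)),
    fun j => trip ((NB.orderIsoOfFin hNBcard) j)) with hc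
  have hcimg : Finset.image c.1 Finset.univ = Finset.image base Finset.univ := rfl
  have hKmem : ∀ u, u ∈ Finset.image base Finset.univ ↔ (W.r u).val ≤ k := by
    intro u; rw [hbimg]; simp
  have hK1 : ∀ u, u ∉ Finset.image base Finset.univ →
      trOf n k c u = some (trip u) := by
    intro u hu
    have humem : u ∈ NB := by
      rw [hNB]; exact Finset.mem_sdiff.mpr ⟨Finset.mem_univ _, hu⟩
    have hcard' : (Finset.univ \ Finset.image c.1 Finset.univ).card = n - k - 1 := by
      rw [hcimg, ← hNB]; exact hNBcard
    have humem' : u ∈ Finset.univ \ Finset.image c.1 Finset.univ := by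
      rw [hcimg, ← hNB]; exact humem
    simp only [trOf]
    rw [dif_pos hcard', dif_pos humem']
    show some (trip (((NB.orderIsoOfFin hNBcard)
      ((NB.orderIsoOfFin hNBcard).symm ⟨u, humem⟩) : {x // x ∈ NB}) : Fin n)) = _
    rw [OrderIso.apply_symm_apply]
  have hSf : ∀ t (u : Fin n), (W.r u).val < t → Sfuel n k c t u = W.S u := by
    intro t
    induction t with
    | zero => intro u h; omega
    | succ t ih =>
      intro u hu
      by_cases hb : u ∈ Finset.image base Finset.univ
      · rw [Sfuel_succ, if_pos hb, hcimg, hbimg]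
        exact (W.hbase u ((hKmem u).mp hb)).symm
      · have hku : k < (W.r u).val := by
          have := (hKmem u).not.mp hb; omega
        obtain ⟨hplt, hxmem, hSeq⟩ := hprop u hku
        have hplt' : (W.r (p u)).val < t := by
          have h1 : (W.r (p u)).val < (W.r u).val := hplt
          omega
        rw [Sfuel_succ, if_neg hb, hK1 u hb]
        have hSp : Sfuel n k c t (p u) = W.S (p u) := ih (p u) hplt'
        show insert (trip u).1 ((Sfuel n k c t (trip u).1).erase
          (nthel (Sfuel n k c t (trip u).1) (trip u).2.1.val u)) = W.S u
        have htrip1 : (trip u).1 = p u := rfl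
        have htrip2 : (trip u).2.1 = dF u := rfl
        rw [htrip1, htrip2, hSp]
        have hdFu : (dF u).val = d u := by rw [hdF]; simp [dif_pos hku]
        have hnthx : nthel (W.S (p u)) (d u) u = x u := by
          rw [nthel, hd]
          have hxmem' : x u ∈ (W.S (p u)).sort (· ≤ ·) :=
            (Finset.mem_sort _).mpr hxmem
          have hlen := List.idxOf_lt_length_iff.mpr hxmem'
          rw [List.getD_eq_getElem _ _ hlen, List.getElem_idxOf]
        rw [hdFu, hnthx, ← hSeq]
  refine ⟨c, ?_⟩
  ext u v
  simp only [decodeGraph, SimpleGraph.fromRel_adj]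
  have hfwd : ∀ a b : Fin n,
      ((∃ i j : Fin (k+1), ∃ hij : i < j, c.1 i = a ∧ c.1 j = b ∧
        c.2.1 ⟨(i, j), hij⟩ = true) ∨
      (∃ tr, trOf n k c a = some tr ∧ ∃ i : Fin k, tr.2.2 i = true ∧
        nthel (Sfuel n k c n a) i.val a = b)) → G.Adj a b := by
    rintro a b (⟨i, j, hij, rfl, rfl, hbe⟩ | ⟨tr, htr, i, hFi, hnth⟩)
    · exact of_decide_eq_true hbe
    · have hb : a ∉ Finset.image base Finset.univ := by
        intro hmem
        have : a ∉ NB := by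
          rw [hNB]; simp [hmem]
        simp only [trOf] at htr
        by_cases hcc : (Finset.univ \ Finset.image c.1 Finset.univ).card = n - k - 1
        · rw [dif_pos hcc] at htr
          have : a ∉ Finset.univ \ Finset.image c.1 Finset.univ := by
            rw [hcimg, ← hNB]; exact this
          rw [dif_neg this] at htr
          cases htr
        · rw [dif_neg hcc] at htr
          cases htr
      rw [hK1 a hb] at htr
      obtain rfl : tr = trip a := (Option.some.injEq _ _).mp htr.symm
      have hFi' : G.Adj a (nthel (W.S a) i.val a) := of_decide_eq_true hFi
      have hSfa : Sfuel n k c n a = W.S a := hSf n a (W.r a).isLt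
      rw [hSfa] at hnth
      rwa [hnth] at hFi'
  constructor
  · rintro ⟨hne, h | h⟩
    · exact hfwd u v h
    · exact (hfwd v u h).symm
  · intro hadj
    refine ⟨hadj.ne, ?_⟩
    have hbck : ∀ a b : Fin n, G.Adj a b → W.r b < W.r a →
        ((∃ i j : Fin (k+1), ∃ hij : i < j, c.1 i = a ∧ c.1 j = b ∧
          c.2.1 ⟨(i, j), hij⟩ = true) ∨
        (∃ tr, trOf n k c a = some tr ∧ ∃ i : Fin k, tr.2.2 i = true ∧
          nthel (Sfuel n k c n a) i.val a = b)) ∨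
        ((∃ i j : Fin (k+1), ∃ hij : i < j, c.1 i = b ∧ c.1 j = a ∧
          c.2.1 ⟨(i, j), hij⟩ = true) ∨
        (∃ tr, trOf n k c b = some tr ∧ ∃ i : Fin k, tr.2.2 i = true ∧
          nthel (Sfuel n k c n b) i.val b = a)) := by
      intro a b hab hba
      by_cases hbs : (W.r a).val ≤ k
      · -- both base vertices
        have hbbs : (W.r b).val ≤ k := by
          have : (W.r b).val < (W.r a).val := hba
          omega
        refine Or.inr (Or.inl ?_)
        refine ⟨⟨(W.r b).val, by omega⟩, ⟨(W.r a).val, by omega⟩,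
          Fin.mk_lt_mk.mpr hba, ?_, ?_, ?_⟩
        · exact hbase_eval b (by omega)
        · exact hbase_eval a (by omega)
        · show decide (G.Adj (base ⟨(W.r b).val, by omega⟩)
            (base ⟨(W.r a).val, by omega⟩)) = true
          rw [hbase_eval b (by omega), hbase_eval a (by omega)]
          exact decide_eq_true hab.symm
      · -- a is not a base vertex
        have hka : k < (W.r a).val := by omega
        have hanb : a ∉ Finset.image base Finset.univ := by
          rw [hKmem]; omega
        have hmemS : b ∈ W.S a := W.hedge a b hab hba
        have hbmem : b ∈ (W.S a).sort (· ≤ ·) := (Finset.mem_sort _).mpr hmemS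
        have hlen := List.idxOf_lt_length_iff.mpr hbmem
        have hidx : List.idxOf b ((W.S a).sort (· ≤ ·)) < k := by
          rwa [Finset.length_sort, W.hcard] at hlen
        refine Or.inl (Or.inr ?_)
        refine ⟨trip a, hK1 a hanb, ⟨List.idxOf b ((W.S a).sort (· ≤ ·)), hidx⟩,
          ?_, ?_⟩
        · show decide (G.Adj a
            (nthel (W.S a) (List.idxOf b ((W.S a).sort (· ≤ ·))) a)) = true
          rw [show nthel (W.S a) (List.idxOf b ((W.S a).sort (· ≤ ·))) a = b by
            rw [nthel, List.getD_eq_getElem _ _ hlen, List.getElem_idxOf]]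
          exact decide_eq_true hab
        · rw [hSf n a (W.r a).isLt]
          show nthel (W.S a) (List.idxOf b ((W.S a).sort (· ≤ ·))) a = b
          rw [nthel, List.getD_eq_getElem _ _ hlen, List.getElem_idxOf]
    rcases lt_or_gt_of_ne (fun h : W.r v = W.r u => hadj.ne (W.r.injective h).symm)
      with h | h
    · exact hbck u v hadj h
    · exact Or.symm (hbck v u hadj.symm h)

def pairEquiv (k : ℕ) :
    { p : Fin (k+1) × Fin (k+1) // p.1 < p.2 } ≃ (Σ j : Fin (k+1), Fin j.val) where
  toFun q := ⟨q.1.2, ⟨q.1.1.val, q.2⟩⟩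
  invFun s := ⟨(⟨s.2.val, lt_trans s.2.isLt s.1.isLt⟩, s.1), s.2.isLt⟩
  left_inv q := rfl
  right_inv s := rfl

lemma card_pair (k : ℕ) :
    Fintype.card { p : Fin (k+1) × Fin (k+1) // p.1 < p.2 } = k * (k+1) / 2 := by
  rw [Fintype.card_congr (pairEquiv k), Fintype.card_sigma]
  simp only [Fintype.card_fin]
  rw [Fin.sum_univ_eq_sum_range (fun i => i) (k+1), Finset.sum_range_id,
    Nat.add_sub_cancel, Nat.mul_comm]

lemma card_code (n k : ℕ) :
    Fintype.card (KCode n k)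
      = n^(k+1) * 2^(k*(k+1)/2) * (n * (k * 2^k))^(n-k-1) := by
  rw [Fintype.card_prod, Fintype.card_prod]
  rw [Fintype.card_fun, Fintype.card_fun, Fintype.card_fun]
  rw [Fintype.card_prod, Fintype.card_prod, Fintype.card_fun]
  simp only [Fintype.card_fin, card_pair, Fintype.card_bool]
  ring

/-- For `0 < k ≤ n` with `n ≥ k+2`, the number of labeled partial `k`-trees on `{1,…,n}`
is at most `(k · 2^k · n)^n · 2^(−k(k+1)/2) · k^(−k)`. -/
theorem numPartialKTrees_upper' (n k : ℕ) (hk : 0 < k) (hkn : k ≤ n) (hn : k + 2 ≤ n) :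
    (numPartialKTrees n k : ℝ) ≤
      ((k : ℝ) * 2 ^ k * n) ^ n * (2 : ℝ) ^ (-((k * (k + 1) / 2 : ℕ) : ℤ)) *
        (k : ℝ) ^ (-(k : ℤ)) := by
  classical
  have hn1 : k + 1 ≤ n := by omega
  have hex : ∀ Gp : {G : SimpleGraph (Fin n) // IsPartialKTree k G},
      ∃ c : KCode n k, decodeGraph n k c = Gp.val := by
    rintro ⟨G, hG⟩
    obtain ⟨W⟩ := exists_wit hk hn1 hG
    exact exists_code hk hn1 W
  choose enc henc using hex
  have hinj : Function.Injective enc := by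
    intro G1 G2 h
    apply Subtype.ext
    rw [← henc G1, ← henc G2, h]
  have hcard : numPartialKTrees n k ≤ Fintype.card (KCode n k) := by
    rw [numPartialKTrees, ← Nat.card_eq_fintype_card]
    exact Nat.card_le_card_of_injective enc hinj
  set T := k * (k+1) / 2 with hT
  have h2T : T * 2 = k * (k+1) := Nat.div_mul_cancel (Nat.even_mul_succ_self k).two_dvd
  have hkey : Fintype.card (KCode n k) * (2^T * k^k) ≤ (k * 2^k * n)^n := by
    rw [card_code]
    have hsplit : (k * 2^k * n)^n = (k*2^k*n)^(n-k-1) * (k*2^k*n)^(k+1) := by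
      rw [← pow_add]
      congr 1
      omega
    have hlast : (k*2^k*n)^(k+1) = k^k * k * (2^T * 2^T) * n^(k+1) := by
      calc (k*2^k*n)^(k+1) = k^(k+1) * (2^k)^(k+1) * n^(k+1) := by
            rw [mul_pow, mul_pow]
      _ = k^k * k * 2^(k*(k+1)) * n^(k+1) := by rw [pow_succ, ← pow_mul]
      _ = k^k * k * (2^T * 2^T) * n^(k+1) := by
            rw [← pow_add, ← h2T]
            ring
    rw [hsplit, hlast]
    have heq : n^(k+1) * 2^T * (n * (k * 2^k))^(n-k-1) * (2^T * k^k) * k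
        = (k*2^k*n)^(n-k-1) * (k^k * k * (2^T * 2^T) * n^(k+1)) := by
      rw [show n * (k * 2^k) = k*2^k*n by ring]
      ring
    calc n^(k+1) * 2^T * (n * (k * 2^k))^(n-k-1) * (2^T * k^k)
        ≤ n^(k+1) * 2^T * (n * (k * 2^k))^(n-k-1) * (2^T * k^k) * k :=
          Nat.le_mul_of_pos_right _ hk
    _ = (k*2^k*n)^(n-k-1) * (k^k * k * (2^T * 2^T) * n^(k+1)) := heq
  have hkeyR : (numPartialKTrees n k : ℝ) * (2^T * (k:ℝ)^k) ≤ ((k:ℝ) * 2^k * n)^n := by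
    have h1 : numPartialKTrees n k * (2^T * k^k) ≤ (k * 2^k * n)^n :=
      le_trans (Nat.mul_le_mul_right _ hcard) hkey
    exact_mod_cast h1
  have hkpos : (0:ℝ) < (k:ℝ) := by exact_mod_cast hk
  have h2pos : (0:ℝ) < 2^T * (k:ℝ)^k := by positivity
  have hgoal_eq : ((k : ℝ) * 2 ^ k * n) ^ n * (2 : ℝ) ^ (-((k * (k + 1) / 2 : ℕ) : ℤ)) *
      (k : ℝ) ^ (-(k : ℤ))
      = ((k:ℝ) * 2^k * n)^n / (2^T * (k:ℝ)^k) := by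
    rw [zpow_neg, zpow_neg, zpow_natCast, zpow_natCast]
    rw [mul_assoc, ← mul_inv, ← div_eq_mul_inv, hT]
  rw [hgoal_eq, le_div_iff₀ h2pos]
  exact hkeyR
end

section
/- For all integers n, k with 0 < k ≤ n, the number T_{n,k} of labeled partial k-trees on the vertex set {1,…,n} satisfies T_{n,k} ≥ (n−k+1)^{n−k−1} · 2^{(k−1)(n−k+1)}. -/
open Finset

/-- Prüfer-style decoding: given a sequence and a set of available vertices,
produce a list of (removed leaf, its neighbor) pairs. -/
def pruferDecode : List ℕ → Finset ℕ → List (ℕ × ℕ)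
  | [], A =>
      let x := A.min.untopD 0
      [((A.erase x).min.untopD 0, x)]
  | a :: s, A =>
      let l := (A \ (a :: s).toFinset).min.untopD 0
      (l, a) :: pruferDecode s (A.erase l)

def edgesOf (L : List (ℕ × ℕ)) : Finset (Sym2 ℕ) :=
  (L.map fun p => s(p.1, p.2)).toFinset

lemma edgesOf_cons (p : ℕ × ℕ) (L : List (ℕ × ℕ)) :
    edgesOf (p :: L) = insert s(p.1, p.2) (edgesOf L) := by
  simp [edgesOf]

lemma min_untop'_mem {A : Finset ℕ} (h : A.Nonempty) : A.min.untopD 0 ∈ A := by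
  obtain ⟨a, ha⟩ := Finset.min_of_nonempty h
  rw [ha]
  exact Finset.mem_of_min ha

lemma sdiff_toFinset_nonempty {A : Finset ℕ} {s : List ℕ}
    (hA : A.card = s.length + 2) : (A \ s.toFinset).Nonempty := by
  rw [← Finset.card_pos]
  have h1 : (A \ s.toFinset).card ≥ A.card - s.toFinset.card := Finset.le_card_sdiff _ _
  have h2 : s.toFinset.card ≤ s.length := s.toFinset_card_le
  omega

/-- Endpoints of decode are in `A` and distinct. -/
lemma pruferDecode_mem : ∀ (s : List ℕ) (A : Finset ℕ),
    A.card = s.length + 2 → (∀ x ∈ s, x ∈ A) →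
    ∀ p ∈ pruferDecode s A, p.1 ∈ A ∧ p.2 ∈ A ∧ p.1 ≠ p.2
  | [], A, hA, _ => by
    intro p hp
    have hAne : A.Nonempty := by rw [← Finset.card_pos]; omega
    set x := A.min.untopD 0 with hx
    have hxA : x ∈ A := min_untop'_mem hAne
    have hene : (A.erase x).Nonempty := by
      rw [← Finset.card_pos, Finset.card_erase_of_mem hxA]; omega
    have hy : (A.erase x).min.untopD 0 ∈ A.erase x := min_untop'_mem hene
    simp only [pruferDecode, List.mem_singleton] at hp
    subst hp
    exact ⟨Finset.mem_of_mem_erase hy, hxA, Finset.ne_of_mem_erase hy⟩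
  | a :: s, A, hA, hs => by
    intro p hp
    set l := (A \ (a :: s).toFinset).min.untopD 0 with hl
    have hlmem : l ∈ A \ (a :: s).toFinset :=
      min_untop'_mem (sdiff_toFinset_nonempty (by simpa using hA))
    have hlA : l ∈ A := (Finset.mem_sdiff.mp hlmem).1
    have hlns : l ∉ (a :: s) := by
      have := (Finset.mem_sdiff.mp hlmem).2
      simpa using this
    simp only [pruferDecode, List.mem_cons] at hp
    rcases hp with hp | hp
    · subst hp
      refine ⟨hlA, hs a (by simp), fun h => hlns ?_⟩
      simp only at h
      rw [hl, h]
      simp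
    · have hA' : (A.erase l).card = s.length + 2 := by
        rw [Finset.card_erase_of_mem hlA]; simp at hA ⊢; omega
      have hs' : ∀ x ∈ s, x ∈ A.erase l := fun x hx =>
        Finset.mem_erase.mpr ⟨fun h => hlns (by rw [← h]; exact List.mem_cons_of_mem _ hx), hs x (by simp [hx])⟩
      have := pruferDecode_mem s (A.erase l) hA' hs' p hp
      exact ⟨Finset.mem_of_mem_erase this.1, Finset.mem_of_mem_erase this.2.1, this.2.2⟩

/-- All vertices of edges are in A, and edges are non-diagonal. -/
lemma edgesOf_pruferDecode_mem {s : List ℕ} {A : Finset ℕ}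
    (hA : A.card = s.length + 2) (hs : ∀ x ∈ s, x ∈ A)
    {e : Sym2 ℕ} (he : e ∈ edgesOf (pruferDecode s A)) :
    (∀ x ∈ e, x ∈ A) ∧ ¬ e.IsDiag := by
  simp only [edgesOf, List.mem_toFinset, List.mem_map] at he
  obtain ⟨p, hp, rfl⟩ := he
  obtain ⟨h1, h2, h3⟩ := pruferDecode_mem s A hA hs p hp
  constructor
  · intro x hx
    rcases Sym2.mem_iff.mp hx with rfl | rfl <;> assumption
  · simpa using h3

def degE (E : Finset (Sym2 ℕ)) (v : ℕ) : ℕ := (E.filter fun e => v ∈ e).card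

lemma pruferDecode_nil (A : Finset ℕ) (hA : A.card = 2) :
    ∃ x y, x ∈ A ∧ y ∈ A ∧ x ≠ y ∧ A = {x, y} ∧
      pruferDecode [] A = [(y, x)] := by
  have hAne : A.Nonempty := by rw [← Finset.card_pos]; omega
  set x := A.min.untopD 0 with hx
  have hxA : x ∈ A := min_untop'_mem hAne
  have hene : (A.erase x).Nonempty := by
    rw [← Finset.card_pos, Finset.card_erase_of_mem hxA]; omega
  set y := (A.erase x).min.untopD 0 with hy
  have hyA : y ∈ A.erase x := min_untop'_mem hene
  refine ⟨x, y, hxA, Finset.mem_of_mem_erase hyA, fun h => (Finset.ne_of_mem_erase hyA) h.symm, ?_, rfl⟩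
  · refine (Finset.eq_of_subset_of_card_le ?_ ?_).symm
    · intro v hv
      rcases Finset.mem_insert.mp hv with rfl | hv
      · exact hxA
      · simp only [Finset.mem_singleton] at hv; subst hv; exact Finset.mem_of_mem_erase hyA
    · rw [hA]
      have hne : x ∉ ({y} : Finset ℕ) := by
        simp only [Finset.mem_singleton]
        exact fun h => (Finset.ne_of_mem_erase hyA) h.symm
      rw [Finset.card_insert_of_notMem hne, Finset.card_singleton]

lemma degE_pruferDecode : ∀ (s : List ℕ) (A : Finset ℕ),
    A.card = s.length + 2 → (∀ x ∈ s, x ∈ A) →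
    ∀ v ∈ A, degE (edgesOf (pruferDecode s A)) v = 1 + s.count v
  | [], A, hA, _ => by
    intro v hv
    obtain ⟨x, y, hxA, hyA, hxy, hAxy, hdec⟩ := pruferDecode_nil A (by simpa using hA)
    rw [hdec]
    have hve : v ∈ s(y, x) := by
      rw [hAxy] at hv
      rcases Finset.mem_insert.mp hv with rfl | hv
      · simp
      · simp only [Finset.mem_singleton] at hv; subst hv; simp
    simp [edgesOf, degE, Finset.filter_singleton, hve]
  | a :: s, A, hA, hs => by
    intro v hv
    set l := (A \ (a :: s).toFinset).min.untopD 0 with hl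
    have hlmem : l ∈ A \ (a :: s).toFinset :=
      min_untop'_mem (sdiff_toFinset_nonempty (by simpa using hA))
    have hlA : l ∈ A := (Finset.mem_sdiff.mp hlmem).1
    have hlns : l ∉ (a :: s) := by
      have := (Finset.mem_sdiff.mp hlmem).2; simpa using this
    have hA' : (A.erase l).card = s.length + 2 := by
      rw [Finset.card_erase_of_mem hlA]; simp at hA ⊢; omega
    have hs' : ∀ x ∈ s, x ∈ A.erase l := fun x hx =>
      Finset.mem_erase.mpr ⟨fun h => hlns (by rw [← h]; exact List.mem_cons_of_mem _ hx),
        hs x (by simp [hx])⟩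
    have hlE' : ∀ e ∈ edgesOf (pruferDecode s (A.erase l)), l ∉ e := by
      intro e he hle
      have := (edgesOf_pruferDecode_mem hA' hs' he).1 l hle
      exact (Finset.mem_erase.mp this).1 rfl
    have hnotmem : s(l, a) ∉ edgesOf (pruferDecode s (A.erase l)) := by
      intro h; exact hlE' _ h (by simp)
    show degE (edgesOf ((l, a) :: pruferDecode s (A.erase l))) v = _
    rw [edgesOf_cons]
    by_cases hvl : v = l
    · subst hvl
      have h1 : (edgesOf (pruferDecode s (A.erase l))).filter (fun e => l ∈ e) = ∅ := by
        rw [Finset.filter_eq_empty_iff]; exact hlE'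
      rw [degE, Finset.filter_insert]
      simp only [Sym2.mem_iff, true_or, if_pos]
      rw [h1]
      have h2 : (a :: s).count l = 0 := List.count_eq_zero.mpr hlns
      simp [h2]
    · have hvA' : v ∈ A.erase l := Finset.mem_erase.mpr ⟨hvl, hv⟩
      have ih := degE_pruferDecode s (A.erase l) hA' hs' v hvA'
      rw [degE, Finset.filter_insert]
      rcases eq_or_ne v a with rfl | hva
      · simp only [Sym2.mem_iff, or_true, if_pos]
        rw [Finset.card_insert_of_notMem (fun h => hnotmem (Finset.mem_filter.mp h).1)]
        rw [degE] at ih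
        rw [ih]
        simp [List.count_cons]
        omega
      · have : v ∉ s(l, a) := by simp [hvl, hva]
        rw [if_neg this]
        rw [degE] at ih
        rw [ih, List.count_cons]
        simp [hva, Ne.symm hva]

lemma leafset_eq (s : List ℕ) (A : Finset ℕ) (hA : A.card = s.length + 2)
    (hs : ∀ x ∈ s, x ∈ A) :
    A \ s.toFinset = A.filter (fun v => degE (edgesOf (pruferDecode s A)) v = 1) := by
  ext v
  simp only [Finset.mem_sdiff, Finset.mem_filter, List.mem_toFinset]
  constructor
  · rintro ⟨hv, hns⟩
    refine ⟨hv, ?_⟩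
    rw [degE_pruferDecode s A hA hs v hv, List.count_eq_zero.mpr hns]
  · rintro ⟨hv, hdeg⟩
    refine ⟨hv, fun hmem => ?_⟩
    rw [degE_pruferDecode s A hA hs v hv] at hdeg
    have : 0 < s.count v := List.count_pos_iff.mpr hmem
    omega

lemma filter_at_leaf (a : ℕ) (s : List ℕ) (A : Finset ℕ)
    (hA : A.card = (a :: s).length + 2) (hs : ∀ x ∈ a :: s, x ∈ A) :
    (edgesOf (pruferDecode (a :: s) A)).filter
      (fun e => ((A \ (a :: s).toFinset).min.untopD 0) ∈ e)
      = {s((A \ (a :: s).toFinset).min.untopD 0, a)} := by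
  set l := (A \ (a :: s).toFinset).min.untopD 0 with hl
  have hlmem : l ∈ A \ (a :: s).toFinset :=
    min_untop'_mem (sdiff_toFinset_nonempty (by simpa using hA))
  have hlA : l ∈ A := (Finset.mem_sdiff.mp hlmem).1
  have hlns : l ∉ (a :: s) := by
    have := (Finset.mem_sdiff.mp hlmem).2; simpa using this
  have hA' : (A.erase l).card = s.length + 2 := by
    rw [Finset.card_erase_of_mem hlA]; simp at hA ⊢; omega
  have hs' : ∀ x ∈ s, x ∈ A.erase l := fun x hx =>
    Finset.mem_erase.mpr ⟨fun h => hlns (by rw [← h]; exact List.mem_cons_of_mem _ hx),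
      hs x (by simp [hx])⟩
  have hlE' : ∀ e ∈ edgesOf (pruferDecode s (A.erase l)), l ∉ e := by
    intro e he hle
    have := (edgesOf_pruferDecode_mem hA' hs' he).1 l hle
    exact (Finset.mem_erase.mp this).1 rfl
  show (edgesOf ((l, a) :: pruferDecode s (A.erase l))).filter _ = _
  rw [edgesOf_cons, Finset.filter_insert]
  simp only [Sym2.mem_iff, true_or, if_pos]
  rw [Finset.filter_eq_empty_iff.mpr hlE']
  rfl

lemma tail_edges (a : ℕ) (s : List ℕ) (A : Finset ℕ)
    (hA : A.card = (a :: s).length + 2) (hs : ∀ x ∈ a :: s, x ∈ A) :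
    edgesOf (pruferDecode s (A.erase ((A \ (a :: s).toFinset).min.untopD 0)))
      = (edgesOf (pruferDecode (a :: s) A)).erase
          s((A \ (a :: s).toFinset).min.untopD 0, a) := by
  set l := (A \ (a :: s).toFinset).min.untopD 0 with hl
  have hlmem : l ∈ A \ (a :: s).toFinset :=
    min_untop'_mem (sdiff_toFinset_nonempty (by simpa using hA))
  have hlA : l ∈ A := (Finset.mem_sdiff.mp hlmem).1
  have hlns : l ∉ (a :: s) := by
    have := (Finset.mem_sdiff.mp hlmem).2; simpa using this
  have hA' : (A.erase l).card = s.length + 2 := by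
    rw [Finset.card_erase_of_mem hlA]; simp at hA ⊢; omega
  have hs' : ∀ x ∈ s, x ∈ A.erase l := fun x hx =>
    Finset.mem_erase.mpr ⟨fun h => hlns (by rw [← h]; exact List.mem_cons_of_mem _ hx),
      hs x (by simp [hx])⟩
  have hnotmem : s(l, a) ∉ edgesOf (pruferDecode s (A.erase l)) := by
    intro h
    have := (edgesOf_pruferDecode_mem hA' hs' h).1 l (by simp)
    exact (Finset.mem_erase.mp this).1 rfl
  show _ = (edgesOf ((l, a) :: pruferDecode s (A.erase l))).erase _
  rw [edgesOf_cons, Finset.erase_insert hnotmem]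

lemma pruferDecode_injective : ∀ (s t : List ℕ) (A : Finset ℕ),
    A.card = s.length + 2 → A.card = t.length + 2 →
    (∀ x ∈ s, x ∈ A) → (∀ x ∈ t, x ∈ A) →
    edgesOf (pruferDecode s A) = edgesOf (pruferDecode t A) → s = t
  | [], t, A, hAs, hAt, _, _, _ => by
    cases t with
    | nil => rfl
    | cons b t' => simp at hAs hAt; omega
  | a :: s, t, A, hAs, hAt, hs, ht, hE => by
    cases t with
    | nil => simp at hAs hAt; omega
    | cons b t' =>
      have hset : A \ (a :: s).toFinset = A \ (b :: t').toFinset := by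
        rw [leafset_eq _ _ hAs hs, leafset_eq _ _ hAt ht, hE]
      set l := (A \ (a :: s).toFinset).min.untopD 0 with hl
      have hl' : (A \ (b :: t').toFinset).min.untopD 0 = l := by rw [← hset]
      have hfs := filter_at_leaf a s A hAs hs
      have hft := filter_at_leaf b t' A hAt ht
      rw [hl'] at hft
      rw [hE] at hfs
      have hedge : s(l, a) = s(l, b) := by
        have h2 := hfs.symm.trans hft
        exact Finset.singleton_injective h2
      have hab : a = b := Sym2.congr_right.mp hedge
      subst hab
      have hts := tail_edges a s A hAs hs
      have htt := tail_edges a t' A hAt ht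
      rw [hl'] at htt
      rw [hE] at hts
      have htails : edgesOf (pruferDecode s (A.erase l)) = edgesOf (pruferDecode t' (A.erase l)) :=
        hts.trans htt.symm
      have hlmem : l ∈ A \ (a :: s).toFinset :=
        min_untop'_mem (sdiff_toFinset_nonempty (by simpa using hAs))
      have hlA : l ∈ A := (Finset.mem_sdiff.mp hlmem).1
      have hlns : l ∉ (a :: s) := by
        have := (Finset.mem_sdiff.mp hlmem).2; simpa using this
      have hlmt : l ∈ A \ (a :: t').toFinset := by rw [hset] at hlmem; exact hlmem
      have hlnt : l ∉ (a :: t') := by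
        have := (Finset.mem_sdiff.mp hlmt).2; simpa using this
      have hAs' : (A.erase l).card = s.length + 2 := by
        rw [Finset.card_erase_of_mem hlA]; simp at hAs ⊢; omega
      have hAt' : (A.erase l).card = t'.length + 2 := by
        rw [Finset.card_erase_of_mem hlA]; simp at hAt ⊢; omega
      have hs' : ∀ x ∈ s, x ∈ A.erase l := fun x hx =>
        Finset.mem_erase.mpr ⟨fun h => hlns (by rw [← h]; exact List.mem_cons_of_mem _ hx),
          hs x (by simp [hx])⟩
      have ht' : ∀ x ∈ t', x ∈ A.erase l := fun x hx =>
        Finset.mem_erase.mpr ⟨fun h => hlnt (by rw [← h]; exact List.mem_cons_of_mem _ hx),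
          ht x (by simp [hx])⟩
      rw [pruferDecode_injective s t' (A.erase l) hAs' hAt' hs' ht' htails]

lemma pruferDecode_structure : ∀ (s : List ℕ) (A : Finset ℕ),
    A.card = s.length + 2 → (∀ x ∈ s, x ∈ A) →
    ∃ (g : ℕ → ℕ) (p : ℕ → ℕ),
      Set.InjOn g A ∧ (∀ v ∈ A, g v < s.length + 2) ∧
      (∀ i, 1 ≤ i → p i < i) ∧
      (∀ x y, s(x, y) ∈ edgesOf (pruferDecode s A) →
        ((1 ≤ g x ∧ p (g x) = g y) ∨ (1 ≤ g y ∧ p (g y) = g x)))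
  | [], A, hA, _ => by
    obtain ⟨x, y, hxA, hyA, hxy, hAxy, hdec⟩ := pruferDecode_nil A (by simpa using hA)
    have hyx : ¬ y = x := fun h => hxy h.symm
    refine ⟨fun v => if v = x then 0 else 1, fun _ => 0, ?_, ?_, ?_, ?_⟩
    · intro u hu v hv huv
      beta_reduce at huv
      simp only [hAxy, Finset.coe_insert, Set.mem_insert_iff, Finset.coe_singleton,
        Set.mem_singleton_iff] at hu hv
      by_cases hux : u = x <;> by_cases hvx : v = x
      · rw [hux, hvx]
      · rw [if_pos hux, if_neg hvx] at huv; exact absurd huv (by norm_num)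
      · rw [if_neg hux, if_pos hvx] at huv; exact absurd huv (by norm_num)
      · have hu' : u = y := hu.resolve_left hux
        have hv' : v = y := hv.resolve_left hvx
        rw [hu', hv']
    · intro v _
      beta_reduce
      split <;> omega
    · intro i hi
      beta_reduce
      omega
    · intro u v huv
      rw [hdec] at huv
      simp only [edgesOf, List.map_cons, List.map_nil, List.toFinset_cons, List.toFinset_nil,
        insert_empty_eq, Finset.mem_singleton] at huv
      rw [Sym2.eq_iff] at huv
      rcases huv with ⟨hu, hv⟩ | ⟨hu, hv⟩
      · subst hu; subst hv
        left
        simp [hyx]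
      · subst hu; subst hv
        right
        simp [hyx]
  | a :: s, A, hA, hs => by
    set l := (A \ (a :: s).toFinset).min.untopD 0 with hl
    have hlmem : l ∈ A \ (a :: s).toFinset :=
      min_untop'_mem (sdiff_toFinset_nonempty (by simpa using hA))
    have hlA : l ∈ A := (Finset.mem_sdiff.mp hlmem).1
    have hlns : l ∉ (a :: s) := by
      have := (Finset.mem_sdiff.mp hlmem).2; simpa using this
    have hA' : (A.erase l).card = s.length + 2 := by
      rw [Finset.card_erase_of_mem hlA]; simp at hA ⊢; omega
    have hs' : ∀ x ∈ s, x ∈ A.erase l := fun x hx =>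
      Finset.mem_erase.mpr ⟨fun h => hlns (by rw [← h]; exact List.mem_cons_of_mem _ hx),
        hs x (by simp [hx])⟩
    obtain ⟨g', p', hinj, hbound, hp, hedge⟩ := pruferDecode_structure s (A.erase l) hA' hs'
    have haA : a ∈ A.erase l := by
      refine Finset.mem_erase.mpr ⟨fun h => hlns (by rw [← h]; simp), hs a (by simp)⟩
    refine ⟨fun v => if v = l then s.length + 2 else g' v,
      fun i => if i = s.length + 2 then g' a else p' i, ?_, ?_, ?_, ?_⟩
    · intro u hu v hv huv
      simp only at huv
      by_cases hul : u = l <;> by_cases hvl : v = l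
      · rw [hul, hvl]
      · rw [if_pos hul, if_neg hvl] at huv
        have : v ∈ A.erase l := Finset.mem_erase.mpr ⟨hvl, hv⟩
        have := hbound v this
        omega
      · rw [if_neg hul, if_pos hvl] at huv
        have : u ∈ A.erase l := Finset.mem_erase.mpr ⟨hul, hu⟩
        have := hbound u this
        omega
      · rw [if_neg hul, if_neg hvl] at huv
        exact hinj (Finset.mem_coe.mpr (Finset.mem_erase.mpr ⟨hul, hu⟩))
          (Finset.mem_coe.mpr (Finset.mem_erase.mpr ⟨hvl, hv⟩)) huv
    · intro v hv
      by_cases hvl : v = l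
      · simp [hvl, List.length_cons]
      · simp only [if_neg hvl]
        have := hbound v (Finset.mem_erase.mpr ⟨hvl, hv⟩)
        simp only [List.length_cons]
        omega
    · intro i hi
      beta_reduce
      by_cases hil : i = s.length + 2
      · have := hbound a haA
        rw [if_pos hil]
        omega
      · rw [if_neg hil]
        exact hp i hi
    · intro u v huv
      beta_reduce
      rw [show pruferDecode (a :: s) A = (l, a) :: pruferDecode s (A.erase l) from rfl,
        edgesOf_cons, Finset.mem_insert] at huv
      have hgal : g' a < s.length + 2 := hbound a haA
      have hanel : a ≠ l := fun h => hlns (by rw [← h]; simp)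
      rcases huv with huv | huv
      · rw [Sym2.eq_iff] at huv
        rcases huv with ⟨rfl, rfl⟩ | ⟨rfl, rfl⟩
        · left
          rw [if_pos rfl, if_neg hanel]
          refine ⟨by omega, ?_⟩
          rw [if_pos rfl]
        · right
          rw [if_pos rfl, if_neg hanel]
          refine ⟨by omega, ?_⟩
          rw [if_pos rfl]
      · have hmem := edgesOf_pruferDecode_mem hA' hs' huv
        have hu : u ∈ A.erase l := hmem.1 u (by simp)
        have hv : v ∈ A.erase l := hmem.1 v (by simp)
        have hul : u ≠ l := (Finset.mem_erase.mp hu).1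
        have hvl : v ≠ l := (Finset.mem_erase.mp hv).1
        have hgu : g' u < s.length + 2 := hbound u hu
        have hgv : g' v < s.length + 2 := hbound v hv
        rcases hedge u v huv with ⟨h1, h2⟩ | ⟨h1, h2⟩
        · left
          rw [if_neg hul, if_neg hvl, if_neg (by omega : ¬ g' u = s.length + 2)]
          exact ⟨h1, h2⟩
        · right
          rw [if_neg hul, if_neg hvl, if_neg (by omega : ¬ g' v = s.length + 2)]
          exact ⟨h1, h2⟩

/-- Relation underlying the explicit `k`-tree: vertices `0..k-2` are apexes adjacent to
everything; vertex `k-1+t` is a tree vertex, adjacent to its parent `k-1 + min (p t) (t-1)`. -/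
def ktRel (k : ℕ) (p : ℕ → ℕ) (u v : ℕ) : Prop :=
  u < k - 1 ∨ ∃ t, 1 ≤ t ∧ u = k - 1 + t ∧ v = k - 1 + min (p t) (t - 1)

def ktGraph (k : ℕ) (p : ℕ → ℕ) (N : ℕ) : SimpleGraph (Fin N) :=
  SimpleGraph.fromRel fun u v => ktRel k p u.val v.val

lemma ktGraph_adj {k N : ℕ} {p : ℕ → ℕ} {u v : Fin N} :
    (ktGraph k p N).Adj u v ↔ u ≠ v ∧ (ktRel k p u.val v.val ∨ ktRel k p v.val u.val) :=
  Iff.rfl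

theorem ktGraph_isKTreeConstr (k : ℕ) (hk : 0 < k) (p : ℕ → ℕ) :
    ∀ j : ℕ, IsKTreeConstr k (k + 1 + j) (ktGraph k p (k + 1 + j))
  | 0 => by
    have : ktGraph k p (k + 1 + 0) = ⊤ := by
      ext u v
      simp only [SimpleGraph.top_adj, ktGraph_adj]
      constructor
      · rintro ⟨h, -⟩; exact h
      · intro huv
        refine ⟨huv, ?_⟩
        have hu : u.val < k + 1 := u.isLt
        have hv : v.val < k + 1 := v.isLt
        have hne : u.val ≠ v.val := fun h => huv (Fin.ext h)
        by_cases hu1 : u.val < k - 1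
        · exact Or.inl (Or.inl hu1)
        · by_cases hv1 : v.val < k - 1
          · exact Or.inr (Or.inl hv1)
          · -- both are in {k-1, k}
            rcases (by omega : u.val = k ∧ v.val = k - 1 ∨ u.val = k - 1 ∧ v.val = k) with
              ⟨h1, h2⟩ | ⟨h1, h2⟩
            · exact Or.inl (Or.inr ⟨1, le_refl 1, by omega, by simp; omega⟩)
            · exact Or.inr (Or.inr ⟨1, le_refl 1, by omega, by simp; omega⟩)
    rw [this]
    exact IsKTreeConstr.base
  | j + 1 => by
    have ih := ktGraph_isKTreeConstr k hk p j
    have harith : k + 1 + j = k - 1 + (j + 2) := by omega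
    have hbnd : k - 1 + min (p (j + 2)) (j + 1) < k + 1 + j := by
      have := min_le_right (p (j + 2)) (j + 1)
      omega
    set w : Fin (k + 1 + j) := ⟨k - 1 + min (p (j + 2)) (j + 1), hbnd⟩ with hw
    set S : Finset (Fin (k + 1 + j)) :=
      insert w ((Finset.range (k - 1)).attachFin (fun m hm => by
        simp only [Finset.mem_range] at hm; omega)) with hS
    have hwnot : w ∉ (Finset.range (k - 1)).attachFin (fun m hm => by
        simp only [Finset.mem_range] at hm; omega) := by
      simp only [Finset.mem_attachFin, Finset.mem_range, hw]
      omega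
    have hcard : S.card = k := by
      rw [hS, Finset.card_insert_of_notMem hwnot, Finset.card_attachFin, Finset.card_range]
      omega
    have hclique : (ktGraph k p (k + 1 + j)).IsClique (S : Set (Fin (k + 1 + j))) := by
      intro u hu v hv huv
      simp only [hS, Finset.coe_insert, Set.mem_insert_iff, Finset.mem_coe,
        Finset.mem_attachFin, Finset.mem_range] at hu hv
      rw [ktGraph_adj]
      refine ⟨huv, ?_⟩
      rcases hu with rfl | hu
      · rcases hv with rfl | hv
        · exact absurd rfl huv
        · exact Or.inr (Or.inl hv)
      · exact Or.inl (Or.inl hu)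
    have key : extendGraph (ktGraph k p (k + 1 + j)) S = ktGraph k p (k + 1 + (j + 1)) := by
      ext u v
      constructor
      · intro h
        obtain ⟨hne, hrel⟩ := h
        rw [ktGraph_adj]
        refine ⟨hne, ?_⟩
        have main : ∀ a b : Fin (k + 1 + j + 1),
            ((∃ a' b' : Fin (k + 1 + j), a = Fin.castSucc a' ∧ b = Fin.castSucc b' ∧
              (ktGraph k p (k + 1 + j)).Adj a' b') ∨
             (a = Fin.last (k + 1 + j) ∧ ∃ b' ∈ S, b = Fin.castSucc b')) →
            ktRel k p a.val b.val ∨ ktRel k p b.val a.val := by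
          rintro a b (⟨a', b', rfl, rfl, hadj⟩ | ⟨rfl, b', hb', rfl⟩)
          · rw [ktGraph_adj] at hadj
            simp only [Fin.coe_castSucc]
            exact hadj.2
          · simp only [hS, Finset.mem_insert, Finset.mem_attachFin, Finset.mem_range] at hb'
            rcases hb' with rfl | hb'
            · left
              right
              refine ⟨j + 2, by omega, ?_, ?_⟩
              · rw [Fin.val_last]; exact harith
              · simp [hw]
            · right
              left
              simpa using hb'
        rcases hrel with h | h
        · exact main u v h
        · exact (main v u h).symm
      · intro h
        rw [ktGraph_adj] at h
        obtain ⟨hne, hrel⟩ := h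
        refine ⟨hne, ?_⟩
        have main : ∀ a b : Fin (k + 1 + j + 1), a ≠ b → ktRel k p a.val b.val →
            (((∃ a' b' : Fin (k + 1 + j), a = Fin.castSucc a' ∧ b = Fin.castSucc b' ∧
              (ktGraph k p (k + 1 + j)).Adj a' b') ∨
             (a = Fin.last (k + 1 + j) ∧ ∃ b' ∈ S, b = Fin.castSucc b')) ∨
            ((∃ a' b' : Fin (k + 1 + j), b = Fin.castSucc a' ∧ a = Fin.castSucc b' ∧
              (ktGraph k p (k + 1 + j)).Adj a' b') ∨
             (b = Fin.last (k + 1 + j) ∧ ∃ b' ∈ S, a = Fin.castSucc b'))) := by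
          intro a b hab hrel
          by_cases ha : a.val = k + 1 + j
          · -- a is the last vertex
            have hbval : b.val < k + 1 + j := by
              have := b.isLt
              have : b.val ≠ k + 1 + j := fun h => hab (Fin.ext (by omega))
              omega
            rcases hrel with h | ⟨t, ht1, ht2, ht3⟩
            · omega
            · have htj : t = j + 2 := by omega
              subst htj
              left; right
              refine ⟨Fin.ext (by simp [Fin.val_last]; omega), ⟨b.val, hbval⟩, ?_, Fin.ext rfl⟩
              simp only [hS, Finset.mem_insert]
              left
              rw [hw]
              apply Fin.ext
              simp only
              omega
          · by_cases hb : b.val = k + 1 + j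
            · -- b is last; ktRel a b with b last: apex case or tree case
              rcases hrel with h | ⟨t, ht1, ht2, ht3⟩
              · -- a is an apex, b is last: b = last, a ∈ S (apex part)
                right; right
                refine ⟨Fin.ext (by simp [Fin.val_last]; omega), ⟨a.val, by omega⟩, ?_, Fin.ext rfl⟩
                simp only [hS, Finset.mem_insert, Finset.mem_attachFin, Finset.mem_range]
                right
                exact h
              · -- a = k-1+t, b = k-1 + min (p t) (t-1); but b is last: impossible
                exfalso
                have h1 : min (p t) (t - 1) ≤ t - 1 := min_le_right _ _
                have h2 : a.val < k + 1 + j + 1 := a.isLt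
                omega
            · -- both below last
              left; left
              refine ⟨⟨a.val, by have := a.isLt; omega⟩, ⟨b.val, by have := b.isLt; omega⟩,
                Fin.ext rfl, Fin.ext rfl, ?_⟩
              rw [ktGraph_adj]
              exact ⟨fun h => hab (Fin.ext (by simpa using congrArg Fin.val h)), Or.inl hrel⟩
        rcases hrel with h | h
        · exact main u v hne h
        · exact (main v u (Ne.symm hne) h).elim Or.inr Or.inl
    rw [← key]
    exact IsKTreeConstr.step ih S hcard hclique

/-- Relation for a member of our family: apex `u < k-1` adjacent to tree vertex `v`
iff `Nb u (v-(k-1))`; tree vertices adjacent according to the edge set `E`. -/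
def famRel (k : ℕ) (Nb : ℕ → ℕ → Bool) (E : Finset (Sym2 ℕ)) (u v : ℕ) : Prop :=
  (u < k - 1 ∧ k - 1 ≤ v ∧ Nb u (v - (k - 1)) = true) ∨
  (k - 1 ≤ u ∧ k - 1 ≤ v ∧ s(u - (k - 1), v - (k - 1)) ∈ E)

def famGraph (n k : ℕ) (Nb : ℕ → ℕ → Bool) (E : Finset (Sym2 ℕ)) : SimpleGraph (Fin n) :=
  SimpleGraph.fromRel fun u v => famRel k Nb E u.val v.val

lemma famGraph_adj {n k : ℕ} {Nb : ℕ → ℕ → Bool} {E : Finset (Sym2 ℕ)} {u v : Fin n} :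
    (famGraph n k Nb E).Adj u v ↔
      u ≠ v ∧ (famRel k Nb E u.val v.val ∨ famRel k Nb E v.val u.val) :=
  Iff.rfl

lemma isPartialKTree_of_small (n k : ℕ) (h : n ≤ k + 1) (G : SimpleGraph (Fin n)) :
    IsPartialKTree k G :=
  ⟨k + 1, ⊤, Fin.castLEEmb h, IsKTreeConstr.base, fun u v huv => by
    simp only [SimpleGraph.top_adj]
    exact fun hc => G.ne_of_adj huv ((Fin.castLEEmb h).injective hc)⟩

lemma famGraph_isPartial (n k : ℕ) (hk : 0 < k) (hkn : k + 1 ≤ n)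
    (Nb : ℕ → ℕ → Bool) (σ : List ℕ)
    (hlen : σ.length + 2 = n - k + 1) (hσ : ∀ x ∈ σ, x ∈ Finset.range (n - k + 1)) :
    IsPartialKTree k
      (famGraph n k Nb (edgesOf (pruferDecode σ (Finset.range (n - k + 1))))) := by
  set m := n - k + 1 with hm
  have hA : (Finset.range m).card = σ.length + 2 := by rw [Finset.card_range]; omega
  obtain ⟨g, p, hinj, hbound, hp, hedge⟩ := pruferDecode_structure σ (Finset.range m) hA hσ
  have hbound' : ∀ v, v < m → g v < m := fun v hv => by
    have := hbound v (Finset.mem_range.mpr hv); omega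
  have fbnd : ∀ u : Fin n,
      (if u.val < k - 1 then u.val else k - 1 + g (u.val - (k - 1))) < k + 1 + (n - k - 1) := by
    intro u
    by_cases h : u.val < k - 1
    · rw [if_pos h]; omega
    · rw [if_neg h]
      have h1 : u.val - (k - 1) < m := by have := u.isLt; omega
      have := hbound' _ h1
      omega
  have gmem : ∀ u : Fin n, ¬ u.val < k - 1 → (u.val - (k - 1)) ∈ Finset.range m := by
    intro u h
    rw [Finset.mem_range]
    have := u.isLt; omega
  let f : Fin n → Fin (k + 1 + (n - k - 1)) :=
    fun u => ⟨if u.val < k - 1 then u.val else k - 1 + g (u.val - (k - 1)), fbnd u⟩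
  have finj : Function.Injective f := by
    intro u v huv
    have hval : (f u).val = (f v).val := congrArg Fin.val huv
    simp only [f] at hval
    by_cases h1 : u.val < k - 1 <;> by_cases h2 : v.val < k - 1
    · rw [if_pos h1, if_pos h2] at hval; exact Fin.ext hval
    · rw [if_pos h1, if_neg h2] at hval; omega
    · rw [if_neg h1, if_pos h2] at hval; omega
    · rw [if_neg h1, if_neg h2] at hval
      have := hinj (Finset.mem_coe.mpr (gmem u h1)) (Finset.mem_coe.mpr (gmem v h2))
        (by omega : g (u.val - (k - 1)) = g (v.val - (k - 1)))
      apply Fin.ext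
      omega
  refine ⟨k + 1 + (n - k - 1), ktGraph k p _, ⟨f, finj⟩, ktGraph_isKTreeConstr k hk p _, ?_⟩
  intro u v huv
  rw [famGraph_adj] at huv
  obtain ⟨hne, hrel⟩ := huv
  rw [ktGraph_adj]
  refine ⟨fun h => hne (finj h), ?_⟩
  have main : ∀ u v : Fin n,
      famRel k Nb (edgesOf (pruferDecode σ (Finset.range m))) u.val v.val →
      ktRel k p (f u).val (f v).val ∨ ktRel k p (f v).val (f u).val := by
    intro u v hrel
    rcases hrel with ⟨h1, _h2, _h3⟩ | ⟨h1, h2, h3⟩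
    · left; left
      show (if u.val < k - 1 then u.val else _) < k - 1
      rw [if_pos h1]; exact h1
    · have hx : ¬ u.val < k - 1 := by omega
      have hy : ¬ v.val < k - 1 := by omega
      have hfu : (f u).val = k - 1 + g (u.val - (k - 1)) := by
        show (if u.val < k - 1 then _ else _) = _
        rw [if_neg hx]
      have hfv : (f v).val = k - 1 + g (v.val - (k - 1)) := by
        show (if v.val < k - 1 then _ else _) = _
        rw [if_neg hy]
      rcases hedge _ _ h3 with ⟨ha, hb⟩ | ⟨ha, hb⟩
      · left; right
        refine ⟨g (u.val - (k - 1)), ha, hfu, ?_⟩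
        rw [hfv, ← hb]
        congr 1
        have := hp _ ha
        omega
      · right; right
        refine ⟨g (v.val - (k - 1)), ha, hfv, ?_⟩
        rw [hfu, ← hb]
        congr 1
        have := hp _ ha
        omega
  rcases hrel with h | h
  · exact main u v h
  · exact (main v u h).symm

lemma famGraph_inj_Nb {n k m : ℕ} (hn : n = k - 1 + m)
    {Nb Nb' : ℕ → ℕ → Bool} {E E' : Finset (Sym2 ℕ)}
    (h : famGraph n k Nb E = famGraph n k Nb' E') :
    ∀ i t, i < k - 1 → t < m → Nb i t = Nb' i t := by
  intro i t hi ht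
  have hadj := SimpleGraph.ext_iff.mp h
  set a : Fin n := ⟨i, by omega⟩
  set b : Fin n := ⟨k - 1 + t, by omega⟩
  have key : ∀ (M : ℕ → ℕ → Bool) (F : Finset (Sym2 ℕ)),
      (famGraph n k M F).Adj a b ↔ M i t = true := by
    intro M F
    rw [famGraph_adj]
    constructor
    · rintro ⟨hne, (⟨_, _, hN⟩ | ⟨hge, _, _⟩) | (⟨hlt, _, _⟩ | ⟨_, hge, _⟩)⟩
      · simpa [a, b] using hN
      · exact absurd hge (by simp [a] <;> omega)
      · exact absurd hlt (by simp [b] <;> omega)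
      · exact absurd hge (by simp [a] <;> omega)
    · intro hN
      refine ⟨fun hc => ?_, Or.inl (Or.inl ⟨hi, by simp [b], by simpa [a, b] using hN⟩)⟩
      have := congrArg Fin.val hc
      simp only [a, b] at this
      omega
  have : (famGraph n k Nb E).Adj a b ↔ (famGraph n k Nb' E').Adj a b := by rw [h]
  have h2 := ((key Nb E).symm.trans this).trans (key Nb' E')
  by_cases hb : Nb i t = true
  · rw [hb, (h2.mp hb)]
  · have hb' : Nb i t = false := by simpa using hb
    have : ¬ Nb' i t = true := fun hc => hb (h2.mpr hc)
    rw [hb']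
    have h3 : Nb' i t = false := by simpa using this
    rw [h3]

lemma famGraph_inj_E {n k m : ℕ} (hn : n = k - 1 + m)
    {Nb Nb' : ℕ → ℕ → Bool} {E E' : Finset (Sym2 ℕ)}
    (hE : ∀ e ∈ E, (∀ x ∈ e, x ∈ Finset.range m) ∧ ¬ e.IsDiag)
    (hE' : ∀ e ∈ E', (∀ x ∈ e, x ∈ Finset.range m) ∧ ¬ e.IsDiag)
    (h : famGraph n k Nb E = famGraph n k Nb' E') :
    E = E' := by
  have main : ∀ (M M' : ℕ → ℕ → Bool) (F F' : Finset (Sym2 ℕ)),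
      (∀ e ∈ F, (∀ x ∈ e, x ∈ Finset.range m) ∧ ¬ e.IsDiag) →
      famGraph n k M F = famGraph n k M' F' → ∀ e ∈ F, e ∈ F' := by
    intro M M' F F' hF hMF e he
    induction e using Sym2.ind with
    | _ x y =>
      obtain ⟨hmem, hdiag⟩ := hF _ he
      have hx : x < m := by have := hmem x (by simp); simpa using this
      have hy : y < m := by have := hmem y (by simp); simpa using this
      have hxy : x ≠ y := by simpa using hdiag
      set a : Fin n := ⟨k - 1 + x, by omega⟩
      set b : Fin n := ⟨k - 1 + y, by omega⟩
      have hadj : (famGraph n k M F).Adj a b := by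
        rw [famGraph_adj]
        refine ⟨fun hc => hxy (by have := congrArg Fin.val hc; simp only [a, b] at this; omega),
          Or.inl (Or.inr ⟨by simp [a], by simp [b], ?_⟩)⟩
        have hxx : a.val - (k - 1) = x := by simp [a]
        have hyy : b.val - (k - 1) = y := by simp [b]
        rw [hxx, hyy]
        exact he
      rw [hMF, famGraph_adj] at hadj
      rcases hadj.2 with (⟨hlt, _, _⟩ | ⟨_, _, hmem'⟩) | (⟨hlt, _, _⟩ | ⟨_, _, hmem'⟩)
      · exact absurd hlt (by simp [a] <;> omega)
      · have hxx : a.val - (k - 1) = x := by simp [a]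
        have hyy : b.val - (k - 1) = y := by simp [b]
        rw [hxx, hyy] at hmem'
        exact hmem'
      · exact absurd hlt (by simp [b] <;> omega)
      · have hxx : a.val - (k - 1) = x := by simp [a]
        have hyy : b.val - (k - 1) = y := by simp [b]
        rw [hyy, hxx] at hmem'
        rwa [Sym2.eq_swap] at hmem'
  apply Finset.Subset.antisymm
  · intro e he; exact main Nb Nb' E E' hE h e he
  · intro e he; exact main Nb' Nb E' E hE' h.symm e he

/-- For `0 < k ≤ n`, the number of labeled partial `k`-trees on `{1,…,n}` is at least
`(n−k+1)^(n−k−1) · 2^((k−1)(n−k+1))` (for `n = k` the first factor is `1^(−1) = 1`,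
interpreted as an integer power). -/
theorem numPartialKTrees_lower_apex (n k : ℕ) (hk : 0 < k) (hkn : k ≤ n) :
    ((n : ℝ) - (k : ℝ) + 1) ^ ((n : ℤ) - (k : ℤ) - 1) * (2 : ℝ) ^ ((k - 1) * (n - k + 1)) ≤
      (numPartialKTrees n k : ℝ) := by
  classical
  set m := n - k + 1 with hm
  have hm1 : 1 ≤ m := by omega
  have hn : n = k - 1 + m := by omega
  let listOf : (Fin (m - 2) → Fin m) → List ℕ := fun σ => (List.ofFn σ).map Fin.val
  have hlistlen : ∀ σ, (listOf σ).length = m - 2 := by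
    intro σ; simp [listOf]
  have hlistmem : ∀ σ, ∀ x ∈ listOf σ, x ∈ Finset.range m := by
    intro σ x hx
    simp only [listOf, List.mem_map] at hx
    obtain ⟨i, _, rfl⟩ := hx
    exact Finset.mem_range.mpr i.isLt
  let NbOf : (Fin (k - 1) → Fin m → Bool) → ℕ → ℕ → Bool := fun N i t =>
    if h : i < k - 1 ∧ t < m then N ⟨i, h.1⟩ ⟨t, h.2⟩ else false
  let F : ((Fin (m - 2) → Fin m) × (Fin (k - 1) → Fin m → Bool)) →
      SimpleGraph (Fin n) := fun d =>
    famGraph n k (NbOf d.2) (edgesOf (pruferDecode (listOf d.1) (Finset.range m)))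
  have hmem : ∀ d, IsPartialKTree k (F d) := by
    intro d
    by_cases hm2 : 2 ≤ m
    · exact famGraph_isPartial n k hk (by omega) _ _ (by rw [hlistlen]; omega) (hlistmem _)
    · exact isPartialKTree_of_small n k (by omega) _
  have hFinj : Function.Injective F := by
    intro d d' hdd
    have hNb := famGraph_inj_Nb hn hdd
    have hN : d.2 = d'.2 := by
      funext i t
      have hiff := hNb i.val t.val i.isLt t.isLt
      have h1 : NbOf d.2 i.val t.val = d.2 i t := by
        simp only [NbOf]
        rw [dif_pos ⟨i.isLt, t.isLt⟩]
      have h2 : NbOf d'.2 i.val t.val = d'.2 i t := by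
        simp only [NbOf]
        rw [dif_pos ⟨i.isLt, t.isLt⟩]
      rw [← h1, ← h2, hiff]
    have hσ : d.1 = d'.1 := by
      by_cases hm2 : 2 ≤ m
      · have hcard : (Finset.range m).card = (listOf d.1).length + 2 := by
          rw [Finset.card_range, hlistlen]; omega
        have hcard' : (Finset.range m).card = (listOf d'.1).length + 2 := by
          rw [Finset.card_range, hlistlen]; omega
        have hEcond : ∀ e ∈ edgesOf (pruferDecode (listOf d.1) (Finset.range m)),
            (∀ x ∈ e, x ∈ Finset.range m) ∧ ¬ e.IsDiag :=
          fun _ he => edgesOf_pruferDecode_mem hcard (hlistmem d.1) he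
        have hEcond' : ∀ e ∈ edgesOf (pruferDecode (listOf d'.1) (Finset.range m)),
            (∀ x ∈ e, x ∈ Finset.range m) ∧ ¬ e.IsDiag :=
          fun _ he => edgesOf_pruferDecode_mem hcard' (hlistmem d'.1) he
        have hE := famGraph_inj_E hn hEcond hEcond' hdd
        have hlists := pruferDecode_injective _ _ _ hcard hcard'
          (hlistmem d.1) (hlistmem d'.1) hE
        have hmapinj : Function.Injective (List.map (Fin.val : Fin m → ℕ)) :=
          List.map_injective_iff.mpr Fin.val_injective
        exact List.ofFn_inj.mp (hmapinj hlists)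
      · funext i
        exact absurd i.isLt (by omega)
    exact Prod.ext hσ hN
  have hcount : (m ^ (m - 2) * 2 ^ ((k - 1) * m) : ℕ) ≤ numPartialKTrees n k := by
    have h1 : Nat.card ((Fin (m - 2) → Fin m) × (Fin (k - 1) → Fin m → Bool)) ≤
        numPartialKTrees n k := by
      unfold numPartialKTrees
      apply Nat.card_le_card_of_injective
        (fun d => (⟨F d, hmem d⟩ : {G : SimpleGraph (Fin n) // IsPartialKTree k G}))
      intro d d' h
      exact hFinj (congrArg Subtype.val h)
    have h2 : Nat.card ((Fin (m - 2) → Fin m) × (Fin (k - 1) → Fin m → Bool)) =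
        m ^ (m - 2) * 2 ^ ((k - 1) * m) := by
      simp only [Nat.card_eq_fintype_card, Fintype.card_prod, Fintype.card_fun,
        Fintype.card_fin, Fintype.card_bool]
      rw [← pow_mul, Nat.mul_comm m (k - 1)]
    omega
  by_cases hm2 : 2 ≤ m
  · have hreal1 : ((n : ℝ) - (k : ℝ) + 1) = (m : ℝ) := by
      rw [hm]
      push_cast [Nat.cast_sub hkn]
      ring
    have hz : (n : ℤ) - (k : ℤ) - 1 = ((m - 2 : ℕ) : ℤ) := by omega
    rw [hreal1, hz, zpow_natCast]
    have := (Nat.cast_le (α := ℝ)).mpr hcount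
    calc (m : ℝ) ^ (m - 2) * 2 ^ ((k - 1) * m)
        = ((m ^ (m - 2) * 2 ^ ((k - 1) * m) : ℕ) : ℝ) := by push_cast; ring
      _ ≤ (numPartialKTrees n k : ℝ) := this
  · have hme : m = 1 := by omega
    have hreal1 : ((n : ℝ) - (k : ℝ) + 1) = 1 := by
      have hnk : n = k := by omega
      rw [hnk]; ring
    rw [hreal1, one_zpow, one_mul]
    have hpow1 : m ^ (m - 2) = 1 := by rw [hme]; rfl
    rw [hpow1, one_mul] at hcount
    have := (Nat.cast_le (α := ℝ)).mpr hcount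
    calc (2 : ℝ) ^ ((k - 1) * m)
        = ((2 ^ ((k - 1) * m) : ℕ) : ℝ) := by push_cast; ring
      _ ≤ (numPartialKTrees n k : ℝ) := this
end
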